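/- For every integer n₁ ≥ 2, among all graphs of order n₁ that are complete graphs, dumbbells, or short dumbbells, every such graph has at least ⌈n₁²/4 − n₁/2 + 1⌉ edges; consequently its excess (edges minus vertices) is at least ⌈((n₁−3)² − 5)/4⌉. -/

import Mathlib

section Helpers

lemma two_mul_choose_two (n : ℕ) : 2 * n.choose 2 + n = n * n := by
  induction n with
  | zero => rfl
  | succ n ih =>
    rw [Nat.choose_succ_succ]
    have : n.choose 1 = n := Nat.choose_one_right n
    nlinarith [ih]

lemma card_filter_not_isDiag {V : Type*} [DecidableEq V] (s : Finset V) :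
    (s.sym2.filter fun e => ¬ e.IsDiag).card = s.card.choose 2 := by
  have hdiag : (s.sym2.filter fun e => e.IsDiag) = s.image Sym2.diag := by
    ext e
    induction e using Sym2.ind with
    | _ x y =>
      simp only [Finset.mem_filter, Finset.mk_mem_sym2_iff, Finset.mem_image,
        Sym2.isDiag_iff_proj_eq]
      constructor
      · rintro ⟨⟨hx, hy⟩, h⟩
        exact ⟨x, hx, by simp [Sym2.diag, h]⟩
      · rintro ⟨a, ha, h⟩
        rw [Sym2.diag] at h
        rcases Sym2.eq_iff.mp h with ⟨rfl, rfl⟩ | ⟨rfl, rfl⟩ <;> exact ⟨⟨ha, ha⟩, rfl⟩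
  have h1 := Finset.card_filter_add_card_filter_not
      (s := s.sym2) (p := fun e => e.IsDiag)
  rw [hdiag, Finset.card_image_of_injective s Sym2.diag_injective, Finset.card_sym2,
    Nat.choose_succ_succ, Nat.choose_one_right] at h1
  norm_num at h1
  omega

lemma arith_complete (n : ℕ) (hn : 2 ≤ n) :
    (n : ℚ) ^ 2 / 4 - (n : ℚ) / 2 + 1 ≤ (n.choose 2 : ℚ) := by
  have h : 2 * (n.choose 2 : ℚ) + n = n * n := by exact_mod_cast two_mul_choose_two n
  have h2 : (2 : ℚ) ≤ n := by exact_mod_cast hn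
  nlinarith

lemma arith_dumbbell (n k l : ℕ) (hkl : k + l = n) :
    (n : ℚ) ^ 2 / 4 - (n : ℚ) / 2 + 1 ≤ (k.choose 2 : ℚ) + (l.choose 2 : ℚ) + 1 := by
  have hk : 2 * (k.choose 2 : ℚ) + k = k * k := by exact_mod_cast two_mul_choose_two k
  have hl : 2 * (l.choose 2 : ℚ) + l = l * l := by exact_mod_cast two_mul_choose_two l
  have hn : (k : ℚ) + l = n := by exact_mod_cast hkl
  nlinarith [sq_nonneg ((k : ℚ) - l)]

lemma arith_short (n k l : ℕ) (hn : 2 ≤ n) (hkl : k + l = n + 1) :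
    (n : ℚ) ^ 2 / 4 - (n : ℚ) / 2 + 1 ≤ (k.choose 2 : ℚ) + (l.choose 2 : ℚ) := by
  have hk : 2 * (k.choose 2 : ℚ) + k = k * k := by exact_mod_cast two_mul_choose_two k
  have hl : 2 * (l.choose 2 : ℚ) + l = l * l := by exact_mod_cast two_mul_choose_two l
  have hq : (k : ℚ) + l = n + 1 := by exact_mod_cast hkl
  rcases eq_or_ne k l with rfl | hne
  · have hk2 : 2 ≤ k := by omega
    have hk2' : (2 : ℚ) ≤ k := by exact_mod_cast hk2
    nlinarith
  · have ha : 1 ≤ |(k : ℤ) - l| := Int.one_le_abs (by omega)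
    have h1 : 1 ≤ ((k : ℤ) - l) ^ 2 := by
      nlinarith [sq_abs ((k : ℤ) - l), abs_nonneg ((k:ℤ)-l)]
    have h1' : 1 ≤ ((k : ℚ) - l) ^ 2 := by exact_mod_cast h1
    have hn' : (2 : ℚ) ≤ n := by exact_mod_cast hn
    nlinarith

end Helpers

/-- `D` is an orientation of the simple graph `G`: every arc lies on an edge of `G`,
and every edge of `G` gets exactly one direction. -/
def IsOrientation {V : Type*} (G : SimpleGraph V) (D : V → V → Prop) : Prop :=
  (∀ u v, D u v → G.Adj u v) ∧ (∀ u v, G.Adj u v → (D u v ↔ ¬ D v u))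

/-- The directed distance from `u` to `v` in the digraph `D` is at most 2. -/
def DistLE2 {V : Type*} (D : V → V → Prop) (u v : V) : Prop :=
  D u v ∨ ∃ w, D u w ∧ D w v

/-- `D` is an orientation of the subgraph of `G` induced by `W`. -/
def IsOrientationOn {V : Type*} (G : SimpleGraph V) (W : Set V) (D : V → V → Prop) : Prop :=
  (∀ u v, D u v → u ∈ W ∧ v ∈ W ∧ G.Adj u v) ∧
  (∀ u v, u ∈ W → v ∈ W → G.Adj u v → (D u v ↔ ¬ D v u))

/-- `B` is a complete graph. -/
def IsCompleteGraph {V : Type*} (B : SimpleGraph V) : Prop :=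
  ∀ u v, u ≠ v → B.Adj u v

/-- `B` is a `(k,ℓ)`-dumbbell: two disjoint cliques joined by a single edge. -/
def IsDumbbell {V : Type*} (B : SimpleGraph V) : Prop :=
  ∃ (K L : Set V) (x y : V), K ∪ L = Set.univ ∧ Disjoint K L ∧ x ∈ K ∧ y ∈ L ∧
    ∀ u v, B.Adj u v ↔ u ≠ v ∧
      ((u ∈ K ∧ v ∈ K) ∨ (u ∈ L ∧ v ∈ L) ∨ (u = x ∧ v = y) ∨ (u = y ∧ v = x))

/-- `B` is a short dumbbell: two cliques sharing exactly one vertex. -/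
def IsShortDumbbell {V : Type*} (B : SimpleGraph V) : Prop :=
  ∃ (K L : Set V) (y : V), K ∪ L = Set.univ ∧ K ∩ L = {y} ∧
    ∀ u v, B.Adj u v ↔ u ≠ v ∧ ((u ∈ K ∧ v ∈ K) ∨ (u ∈ L ∧ v ∈ L))

/-- `B` is a 5-cycle. -/
def IsFiveCycle {V : Type*} (B : SimpleGraph V) : Prop :=
  ∃ f : Fin 5 → V, Function.Bijective f ∧
    ∀ i j, B.Adj (f i) (f j) ↔ (j = i + 1 ∨ i = j + 1)

/-- Every complete graph, dumbbell, or short dumbbell of order `n₁ ≥ 2` has at least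
`⌈n₁²/4 - n₁/2 + 1⌉` edges, and hence excess at least `⌈((n₁ - 3)² - 5)/4⌉`. -/
theorem stmt13 {V : Type*} [Fintype V] (n₁ : ℕ) (hn : 2 ≤ n₁)
    (H : SimpleGraph V) (hcard : Fintype.card V = n₁)
    (hH : IsCompleteGraph H ∨ IsDumbbell H ∨ IsShortDumbbell H) :
    ⌈(n₁ : ℚ) ^ 2 / 4 - (n₁ : ℚ) / 2 + 1⌉ ≤ (Nat.card H.edgeSet : ℤ) ∧
    ⌈(((n₁ : ℚ) - 3) ^ 2 - 5) / 4⌉ ≤ (Nat.card H.edgeSet : ℤ) - (n₁ : ℤ) := by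
  classical
  suffices hmain : (n₁ : ℚ) ^ 2 / 4 - (n₁ : ℚ) / 2 + 1 ≤ (Nat.card H.edgeSet : ℚ) by
    have h1 : ⌈(n₁ : ℚ) ^ 2 / 4 - (n₁ : ℚ) / 2 + 1⌉ ≤ (Nat.card H.edgeSet : ℤ) := by
      rw [Int.ceil_le]; exact_mod_cast hmain
    refine ⟨h1, ?_⟩
    have heq : (((n₁ : ℚ) - 3) ^ 2 - 5) / 4 =
        ((n₁ : ℚ) ^ 2 / 4 - (n₁ : ℚ) / 2 + 1) - (n₁ : ℕ) := by ring
    rw [heq, Int.ceil_sub_natCast]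
    omega
  -- Set up the edge finset
  set Es : Finset (Sym2 V) := H.edgeSet.toFinset with hEs
  have hmem : ∀ u v : V, s(u, v) ∈ Es ↔ H.Adj u v := by
    intro u v; simp [hEs, Set.mem_toFinset]
  have hNatCard : Nat.card H.edgeSet = Es.card := by
    rw [Nat.card_coe_set_eq, Set.ncard_eq_toFinset_card']
  rw [hNatCard]
  rcases hH with hc | hd | hs
  · -- complete graph
    set A : Finset (Sym2 V) :=
      (Finset.univ : Finset V).sym2.filter (fun e => ¬ e.IsDiag) with hA
    have hsub : A ⊆ Es := by
      intro e he
      induction e using Sym2.ind with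
      | _ u v =>
        simp only [hA, Finset.mem_filter, Sym2.isDiag_iff_proj_eq] at he
        exact (hmem u v).mpr (hc u v he.2)
    have hcardA : A.card = n₁.choose 2 := by
      rw [hA, card_filter_not_isDiag, Finset.card_univ, hcard]
    have hle : n₁.choose 2 ≤ Es.card := hcardA ▸ Finset.card_le_card hsub
    calc (n₁ : ℚ) ^ 2 / 4 - (n₁ : ℚ) / 2 + 1 ≤ (n₁.choose 2 : ℚ) := arith_complete n₁ hn
      _ ≤ (Es.card : ℚ) := by exact_mod_cast hle
  · -- dumbbell
    obtain ⟨K, L, x, y, hunion, hdisj, hx, hy, hadj⟩ := hd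
    set Ks := K.toFinset with hKs
    set Ls := L.toFinset with hLs
    have hKmem : ∀ v, v ∈ Ks ↔ v ∈ K := fun v => Set.mem_toFinset
    have hLmem : ∀ v, v ∈ Ls ↔ v ∈ L := fun v => Set.mem_toFinset
    have hxy : x ≠ y := fun h => Set.disjoint_left.mp hdisj hx (h ▸ hy)
    set A : Finset (Sym2 V) := Ks.sym2.filter (fun e => ¬ e.IsDiag) with hA
    set B : Finset (Sym2 V) := Ls.sym2.filter (fun e => ¬ e.IsDiag) with hB
    have hsub : A ∪ B ∪ {s(x, y)} ⊆ Es := by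
      intro e he
      simp only [Finset.mem_union, Finset.mem_singleton] at he
      rcases he with (he | he) | he
      · induction e using Sym2.ind with
        | _ u v =>
          simp only [hA, Finset.mem_filter, Finset.mk_mem_sym2_iff,
            Sym2.isDiag_iff_proj_eq, hKmem] at he
          exact (hmem u v).mpr ((hadj u v).mpr ⟨he.2, Or.inl he.1⟩)
      · induction e using Sym2.ind with
        | _ u v =>
          simp only [hB, Finset.mem_filter, Finset.mk_mem_sym2_iff,
            Sym2.isDiag_iff_proj_eq, hLmem] at he
          exact (hmem u v).mpr ((hadj u v).mpr ⟨he.2, Or.inr (Or.inl he.1)⟩)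
      · subst he
        exact (hmem x y).mpr ((hadj x y).mpr ⟨hxy, Or.inr (Or.inr (Or.inl ⟨rfl, rfl⟩))⟩)
    have hdisjAB : Disjoint A B := by
      rw [Finset.disjoint_left]
      intro e heA heB
      induction e using Sym2.ind with
      | _ u v =>
        simp only [hA, Finset.mem_filter, Finset.mk_mem_sym2_iff, hKmem] at heA
        simp only [hB, Finset.mem_filter, Finset.mk_mem_sym2_iff, hLmem] at heB
        exact Set.disjoint_left.mp hdisj heA.1.1 heB.1.1
    have hnotin : s(x, y) ∉ A ∪ B := by
      simp only [Finset.mem_union, hA, hB, Finset.mem_filter, Finset.mk_mem_sym2_iff,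
        hKmem, hLmem]
      push_neg
      constructor
      · intro h; exact absurd h.2 (fun hyK => Set.disjoint_left.mp hdisj hyK hy)
      · intro h; exact absurd h.1 (fun hxL => Set.disjoint_left.mp hdisj hx hxL)
    have hcardU : (A ∪ B ∪ {s(x, y)}).card = Ks.card.choose 2 + Ls.card.choose 2 + 1 := by
      rw [Finset.card_union_of_disjoint (Finset.disjoint_singleton_right.mpr hnotin),
        Finset.card_union_of_disjoint hdisjAB, hA, hB,
        card_filter_not_isDiag, card_filter_not_isDiag, Finset.card_singleton]
    have hkl : Ks.card + Ls.card = n₁ := by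
      have hu : Ks ∪ Ls = Finset.univ := by
        ext v
        simp only [Finset.mem_union, hKmem, hLmem, Finset.mem_univ, iff_true]
        have : v ∈ K ∪ L := hunion ▸ Set.mem_univ v
        exact this
      have hd2 : Disjoint Ks Ls := by
        rw [Finset.disjoint_left]
        intro a ha hb
        exact Set.disjoint_left.mp hdisj ((hKmem a).mp ha) ((hLmem a).mp hb)
      rw [← Finset.card_union_of_disjoint hd2, hu, Finset.card_univ, hcard]
    have hle : Ks.card.choose 2 + Ls.card.choose 2 + 1 ≤ Es.card :=
      hcardU ▸ Finset.card_le_card hsub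
    calc (n₁ : ℚ) ^ 2 / 4 - (n₁ : ℚ) / 2 + 1
        ≤ (Ks.card.choose 2 : ℚ) + (Ls.card.choose 2 : ℚ) + 1 :=
          arith_dumbbell n₁ Ks.card Ls.card hkl
      _ ≤ (Es.card : ℚ) := by exact_mod_cast hle
  · -- short dumbbell
    obtain ⟨K, L, y, hunion, hinter, hadj⟩ := hs
    set Ks := K.toFinset with hKs
    set Ls := L.toFinset with hLs
    have hKmem : ∀ v, v ∈ Ks ↔ v ∈ K := fun v => Set.mem_toFinset
    have hLmem : ∀ v, v ∈ Ls ↔ v ∈ L := fun v => Set.mem_toFinset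
    set A : Finset (Sym2 V) := Ks.sym2.filter (fun e => ¬ e.IsDiag) with hA
    set B : Finset (Sym2 V) := Ls.sym2.filter (fun e => ¬ e.IsDiag) with hB
    have hsub : A ∪ B ⊆ Es := by
      intro e he
      simp only [Finset.mem_union] at he
      rcases he with he | he
      · induction e using Sym2.ind with
        | _ u v =>
          simp only [hA, Finset.mem_filter, Finset.mk_mem_sym2_iff,
            Sym2.isDiag_iff_proj_eq, hKmem] at he
          exact (hmem u v).mpr ((hadj u v).mpr ⟨he.2, Or.inl he.1⟩)
      · induction e using Sym2.ind with
        | _ u v =>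
          simp only [hB, Finset.mem_filter, Finset.mk_mem_sym2_iff,
            Sym2.isDiag_iff_proj_eq, hLmem] at he
          exact (hmem u v).mpr ((hadj u v).mpr ⟨he.2, Or.inr he.1⟩)
    have hdisjAB : Disjoint A B := by
      rw [Finset.disjoint_left]
      intro e heA heB
      induction e using Sym2.ind with
      | _ u v =>
        simp only [hA, Finset.mem_filter, Finset.mk_mem_sym2_iff,
          Sym2.isDiag_iff_proj_eq, hKmem] at heA
        simp only [hB, Finset.mem_filter, Finset.mk_mem_sym2_iff,
          Sym2.isDiag_iff_proj_eq, hLmem] at heB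
        have hu : u ∈ K ∩ L := ⟨heA.1.1, heB.1.1⟩
        have hv : v ∈ K ∩ L := ⟨heA.1.2, heB.1.2⟩
        rw [hinter] at hu hv
        exact heA.2 (hu.trans hv.symm)
    have hcardU : (A ∪ B).card = Ks.card.choose 2 + Ls.card.choose 2 := by
      rw [Finset.card_union_of_disjoint hdisjAB, hA, hB,
        card_filter_not_isDiag, card_filter_not_isDiag]
    have hkl : Ks.card + Ls.card = n₁ + 1 := by
      have hu : Ks ∪ Ls = Finset.univ := by
        ext v
        simp only [Finset.mem_union, hKmem, hLmem, Finset.mem_univ, iff_true]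
        have : v ∈ K ∪ L := hunion ▸ Set.mem_univ v
        exact this
      have hi : Ks ∩ Ls = {y} := by
        ext v
        simp only [Finset.mem_inter, hKmem, hLmem, Finset.mem_singleton]
        constructor
        · intro h
          have : v ∈ K ∩ L := ⟨h.1, h.2⟩
          rwa [hinter] at this
        · intro h
          have : v ∈ K ∩ L := hinter ▸ (h ▸ rfl : v ∈ ({y} : Set V))
          exact ⟨this.1, this.2⟩
      have := Finset.card_union_add_card_inter Ks Ls
      rw [hu, hi, Finset.card_univ, hcard, Finset.card_singleton] at this
      omega
    have hle : Ks.card.choose 2 + Ls.card.choose 2 ≤ Es.card :=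
      hcardU ▸ Finset.card_le_card hsub
    calc (n₁ : ℚ) ^ 2 / 4 - (n₁ : ℚ) / 2 + 1
        ≤ (Ks.card.choose 2 : ℚ) + (Ls.card.choose 2 : ℚ) :=
          arith_short n₁ Ks.card Ls.card hn hkl
      _ ≤ (Es.card : ℚ) := by exact_mod_cast hle
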